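/- arXiv:0710.2080 — 3 statements merged into one kernel-verified Lean document; each statement's English description precedes it below -/
import Mathlib

section
/- Let N = (V₀, g, A₁, A₂) and Ñ = (Ṽ₀, g̃, Ã₁, Ã₂) where (V₀, g) and (Ṽ₀, g̃) are finite-dimensional positive definite real inner product spaces, A₁, A₂ are algebraic curvature tensors on V₀ Einstein with constants a₁ and a₂ > 0, and Ã₁, Ã₂ are algebraic curvature tensors on Ṽ₀ Einstein with constants ã₁ and ã₂ > 0. Then the models M(N) and M(Ñ) are isomorphic if and only if there exist a linear isomorphism θ : V₀ → Ṽ₀ and a linear map T : V₀ → V₀ which is skew-adjoint with respect to g (g(Tv, w) + g(v, Tw) = 0 for all v, w) and satisfies g(Tv, Tv) < g(v, v) for all v ≠ 0, such that for all v, w, x, y ∈ V₀: g̃(θv, θw) = g(v, w) − g(Tv, Tw), and (Ã₁ + i·Ã₂)(θv, θw, θx, θy) = (A₁ + i·A₂)^ℂ(v + i·Tv, w + i·Tw, x + i·Tx, y + i·Ty), where (A₁ + i·A₂)^ℂ is the complex multilinear extension of A₁ + i·A₂ to (V₀ ⊗ ℂ)⁴. -/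
open TensorProduct

/-- `f : W⁴ → ℝ` is multilinear over `ℝ` in each of its four slots. -/
def IsML {W : Type*} [AddCommGroup W] [Module ℝ W] (f : W → W → W → W → ℝ) : Prop :=
  (∀ x x' y z w, f (x + x') y z w = f x y z w + f x' y z w) ∧
  (∀ (c : ℝ) x y z w, f (c • x) y z w = c * f x y z w) ∧
  (∀ x y y' z w, f x (y + y') z w = f x y z w + f x y' z w) ∧
  (∀ (c : ℝ) x y z w, f x (c • y) z w = c * f x y z w) ∧
  (∀ x y z z' w, f x y (z + z') w = f x y z w + f x y z' w) ∧
  (∀ (c : ℝ) x y z w, f x y (c • z) w = c * f x y z w) ∧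
  (∀ x y z w w', f x y z (w + w') = f x y z w + f x y z w') ∧
  (∀ (c : ℝ) x y z w, f x y z (c • w) = c * f x y z w)

/-- The symmetries of the Riemann curvature tensor. -/
def IsCurvSym {W : Type*} [AddCommGroup W] [Module ℝ W] (f : W → W → W → W → ℝ) : Prop :=
  (∀ x y z w, f x y z w = - f y x z w) ∧
  (∀ x y z w, f x y z w = f z w x y) ∧
  (∀ x y z w, f x y z w + f y z x w + f z x y w = 0)

/-- An algebraic curvature tensor: a multilinear map with the curvature symmetries. -/
def IsACT {W : Type*} [AddCommGroup W] [Module ℝ W] (f : W → W → W → W → ℝ) : Prop :=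
  IsML f ∧ IsCurvSym f

/-- The defining value of `⟨ρ x, y⟩`: the trace of `z ↦ ½𝓡(z,x)y + ½𝓡(z,y)x`,
where `R` is the (curried) curvature operator. -/
noncomputable def ricciForm {V : Type*} [AddCommGroup V] [Module ℝ V]
    (R : V →ₗ[ℝ] V →ₗ[ℝ] V →ₗ[ℝ] V) (x y : V) : ℝ :=
  LinearMap.trace ℝ V
    (((1 : ℝ) / 2) • ((R.flip x).flip y) + ((1 : ℝ) / 2) • ((R.flip y).flip x))

/-- The Jacobi--Ricci commuting identity of Lemma 1 (3). -/
def JRComm {V : Type*} [AddCommGroup V] [Module ℝ V]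
    (A : V → V → V → V → ℝ) (ρ : V →ₗ[ℝ] V) : Prop :=
  ∀ v₁ v₂ v₃ v₄ : V,
    A (ρ v₁) v₂ v₃ v₄ = A v₁ (ρ v₂) v₃ v₄ ∧
    A v₁ (ρ v₂) v₃ v₄ = A v₁ v₂ (ρ v₃) v₄ ∧
    A v₁ v₂ (ρ v₃) v₄ = A v₁ v₂ v₃ (ρ v₄)

/-- The ℂ-valued tensor `A₁ + i·A₂`. -/
noncomputable def acx {W : Type*} [AddCommGroup W] [Module ℝ W]
    (A₁ A₂ : W → W → W → W → ℝ) (x y z w : W) : ℂ :=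
  (A₁ x y z w : ℂ) + Complex.I * (A₂ x y z w : ℂ)

/-- The complex multilinear extension `(A₁ + i·A₂)^ℂ` of `A₁ + i·A₂` to the
complexification of `W`, where `W × W` is identified with `W ⊗ ℂ` via
`(x⁺, x⁻) ↔ x⁺ + i·x⁻`. -/
noncomputable def acExt {W : Type*} [AddCommGroup W] [Module ℝ W]
    (A₁ A₂ : W → W → W → W → ℝ) (p q r s : W × W) : ℂ :=
  acx A₁ A₂ p.1 q.1 r.1 s.1
  + Complex.I * (acx A₁ A₂ p.2 q.1 r.1 s.1 + acx A₁ A₂ p.1 q.2 r.1 s.1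
      + acx A₁ A₂ p.1 q.1 r.2 s.1 + acx A₁ A₂ p.1 q.1 r.1 s.2)
  - (acx A₁ A₂ p.2 q.2 r.1 s.1 + acx A₁ A₂ p.2 q.1 r.2 s.1 + acx A₁ A₂ p.2 q.1 r.1 s.2
      + acx A₁ A₂ p.1 q.2 r.2 s.1 + acx A₁ A₂ p.1 q.2 r.1 s.2 + acx A₁ A₂ p.1 q.1 r.2 s.2)
  - Complex.I * (acx A₁ A₂ p.2 q.2 r.2 s.1 + acx A₁ A₂ p.2 q.2 r.1 s.2
      + acx A₁ A₂ p.2 q.1 r.2 s.2 + acx A₁ A₂ p.1 q.2 r.2 s.2)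
  + acx A₁ A₂ p.2 q.2 r.2 s.2

/-- The curvature tensor `A := Re((A₁ + i·A₂)^ℂ)` of the model `M(V₀,g,A₁,A₂)`. -/
noncomputable def modelA {W : Type*} [AddCommGroup W] [Module ℝ W]
    (A₁ A₂ : W → W → W → W → ℝ) (p q r s : W × W) : ℝ :=
  (acExt A₁ A₂ p q r s).re

/-- The inner product `⟨(x⁺,x⁻),(y⁺,y⁻)⟩ = g(x⁺,y⁺) − g(x⁻,y⁻)` of the model
`M(V₀,g,A₁,A₂)`. -/
def modelB {W : Type*} [AddCommGroup W] [Module ℝ W]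
    (g : LinearMap.BilinForm ℝ W) (p q : W × W) : ℝ :=
  g p.1 q.1 - g p.2 q.2

/-- `f` is Einstein with Einstein constant `a` on the positive definite inner product
space `(W, g)`: for every `g`-orthonormal basis `{e_k}` one has
`Σ_k f(x, e_k, e_k, y) = a·g(x,y)`. -/
def IsEinsteinWith {W : Type*} [AddCommGroup W] [Module ℝ W]
    (g : LinearMap.BilinForm ℝ W) (f : W → W → W → W → ℝ) (a : ℝ) : Prop :=
  ∀ (n : ℕ) (b : Module.Basis (Fin n) ℝ W),
    (∀ i j, g (b i) (b j) = if i = j then 1 else 0) →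
    ∀ x y, (∑ k, f x (b k) (b k) y) = a * g x y

section lemmas
variable {W : Type*} [AddCommGroup W] [Module ℝ W] {A₁ A₂ : W → W → W → W → ℝ}
  (h₁ : IsML A₁) (h₂ : IsML A₂)
include h₁ h₂

lemma acx_add₁ (x x' y z w : W) :
    acx A₁ A₂ (x + x') y z w = acx A₁ A₂ x y z w + acx A₁ A₂ x' y z w := by
  simp only [acx, h₁.1, h₂.1]; push_cast; ring

lemma acx_add₂ (x y y' z w : W) :
    acx A₁ A₂ x (y + y') z w = acx A₁ A₂ x y z w + acx A₁ A₂ x y' z w := by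
  simp only [acx, h₁.2.2.1, h₂.2.2.1]; push_cast; ring

lemma acx_add₃ (x y z z' w : W) :
    acx A₁ A₂ x y (z + z') w = acx A₁ A₂ x y z w + acx A₁ A₂ x y z' w := by
  simp only [acx, h₁.2.2.2.2.1, h₂.2.2.2.2.1]; push_cast; ring

lemma acx_add₄ (x y z w w' : W) :
    acx A₁ A₂ x y z (w + w') = acx A₁ A₂ x y z w + acx A₁ A₂ x y z w' := by
  simp only [acx, h₁.2.2.2.2.2.2.1, h₂.2.2.2.2.2.2.1]; push_cast; ring

lemma acx_smul₁ (c : ℝ) (x y z w : W) :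
    acx A₁ A₂ (c • x) y z w = (c : ℂ) * acx A₁ A₂ x y z w := by
  simp only [acx, h₁.2.1, h₂.2.1]; push_cast; ring

lemma acx_smul₂ (c : ℝ) (x y z w : W) :
    acx A₁ A₂ x (c • y) z w = (c : ℂ) * acx A₁ A₂ x y z w := by
  simp only [acx, h₁.2.2.2.1, h₂.2.2.2.1]; push_cast; ring

lemma acx_smul₃ (c : ℝ) (x y z w : W) :
    acx A₁ A₂ x y (c • z) w = (c : ℂ) * acx A₁ A₂ x y z w := by
  simp only [acx, h₁.2.2.2.2.2.1, h₂.2.2.2.2.2.1]; push_cast; ring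

lemma acx_smul₄ (c : ℝ) (x y z w : W) :
    acx A₁ A₂ x y z (c • w) = (c : ℂ) * acx A₁ A₂ x y z w := by
  simp only [acx, h₁.2.2.2.2.2.2.2, h₂.2.2.2.2.2.2.2]; push_cast; ring

lemma acx_neg₁ (x y z w : W) : acx A₁ A₂ (-x) y z w = - acx A₁ A₂ x y z w := by
  have := acx_smul₁ h₁ h₂ (-1) x y z w; simpa using this

lemma acx_neg₂ (x y z w : W) : acx A₁ A₂ x (-y) z w = - acx A₁ A₂ x y z w := by
  have := acx_smul₂ h₁ h₂ (-1) x y z w; simpa using this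

lemma acx_neg₃ (x y z w : W) : acx A₁ A₂ x y (-z) w = - acx A₁ A₂ x y z w := by
  have := acx_smul₃ h₁ h₂ (-1) x y z w; simpa using this

lemma acx_neg₄ (x y z w : W) : acx A₁ A₂ x y z (-w) = - acx A₁ A₂ x y z w := by
  have := acx_smul₄ h₁ h₂ (-1) x y z w; simpa using this

lemma acx_zero₁ (y z w : W) : acx A₁ A₂ 0 y z w = 0 := by
  have := acx_smul₁ h₁ h₂ 0 0 y z w; simpa using this

lemma acx_zero₂ (x z w : W) : acx A₁ A₂ x 0 z w = 0 := by
  have := acx_smul₂ h₁ h₂ 0 x 0 z w; simpa using this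

lemma acx_zero₃ (x y w : W) : acx A₁ A₂ x y 0 w = 0 := by
  have := acx_smul₃ h₁ h₂ 0 x y 0 w; simpa using this

lemma acx_zero₄ (x y z : W) : acx A₁ A₂ x y z 0 = 0 := by
  have := acx_smul₄ h₁ h₂ 0 x y z 0; simpa using this

lemma acExt_add₁ (p p' q r s : W × W) :
    acExt A₁ A₂ (p + p') q r s = acExt A₁ A₂ p q r s + acExt A₁ A₂ p' q r s := by
  simp only [acExt, Prod.fst_add, Prod.snd_add, acx_add₁ h₁ h₂]; ring

lemma acExt_add₂ (p q q' r s : W × W) :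
    acExt A₁ A₂ p (q + q') r s = acExt A₁ A₂ p q r s + acExt A₁ A₂ p q' r s := by
  simp only [acExt, Prod.fst_add, Prod.snd_add, acx_add₂ h₁ h₂]; ring

lemma acExt_add₃ (p q r r' s : W × W) :
    acExt A₁ A₂ p q (r + r') s = acExt A₁ A₂ p q r s + acExt A₁ A₂ p q r' s := by
  simp only [acExt, Prod.fst_add, Prod.snd_add, acx_add₃ h₁ h₂]; ring

lemma acExt_add₄ (p q r s s' : W × W) :
    acExt A₁ A₂ p q r (s + s') = acExt A₁ A₂ p q r s + acExt A₁ A₂ p q r s' := by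
  simp only [acExt, Prod.fst_add, Prod.snd_add, acx_add₄ h₁ h₂]; ring

lemma acExt_smul₂ (c : ℝ) (p q r s : W × W) :
    acExt A₁ A₂ p (c • q) r s = (c : ℂ) * acExt A₁ A₂ p q r s := by
  simp only [acExt, Prod.smul_fst, Prod.smul_snd, acx_smul₂ h₁ h₂]; ring

lemma acExt_smul₃ (c : ℝ) (p q r s : W × W) :
    acExt A₁ A₂ p q (c • r) s = (c : ℂ) * acExt A₁ A₂ p q r s := by
  simp only [acExt, Prod.smul_fst, Prod.smul_snd, acx_smul₃ h₁ h₂]; ring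

lemma acExt_J₁ (x y : W) (q r s : W × W) :
    acExt A₁ A₂ (-y, x) q r s = Complex.I * acExt A₁ A₂ (x, y) q r s := by
  simp only [acExt, acx_neg₁ h₁ h₂]
  apply Complex.ext <;> simp <;> ring

lemma acExt_J₂ (x y : W) (p r s : W × W) :
    acExt A₁ A₂ p (-y, x) r s = Complex.I * acExt A₁ A₂ p (x, y) r s := by
  simp only [acExt, acx_neg₂ h₁ h₂]
  apply Complex.ext <;> simp <;> ring

lemma acExt_J₃ (x y : W) (p q s : W × W) :
    acExt A₁ A₂ p q (-y, x) s = Complex.I * acExt A₁ A₂ p q (x, y) s := by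
  simp only [acExt, acx_neg₃ h₁ h₂]
  apply Complex.ext <;> simp <;> ring

lemma acExt_J₄ (x y : W) (p q r : W × W) :
    acExt A₁ A₂ p q r (-y, x) = Complex.I * acExt A₁ A₂ p q r (x, y) := by
  simp only [acExt, acx_neg₄ h₁ h₂]
  apply Complex.ext <;> simp <;> ring

lemma acExt_real (a b c d : W) :
    acExt A₁ A₂ (a, 0) (b, 0) (c, 0) (d, 0) = acx A₁ A₂ a b c d := by
  simp [acExt, acx_zero₁ h₁ h₂, acx_zero₂ h₁ h₂, acx_zero₃ h₁ h₂, acx_zero₄ h₁ h₂]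

end lemmas

lemma expand_slot {W : Type*} [AddCommGroup W] [Module ℝ W] (f : W × W → ℂ)
    (hadd : ∀ p p', f (p + p') = f p + f p')
    (hJ : ∀ x y : W, f (-y, x) = Complex.I * f (x, y)) (p : W × W) :
    f p = f (p.1, 0) + Complex.I * f (p.2, 0) := by
  have h0 : f (0, p.2) = Complex.I * f (p.2, 0) := by simpa using hJ p.2 0
  have hp : ((p.1, 0) : W × W) + (0, p.2) = p := by simp
  calc f p = f ((p.1, 0) + (0, p.2)) := by rw [hp]
    _ = f (p.1, 0) + f (0, p.2) := hadd _ _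
    _ = _ := by rw [h0]

lemma exists_on_basis {V : Type*} [AddCommGroup V] [Module ℝ V] [FiniteDimensional ℝ V]
    (g : LinearMap.BilinForm ℝ V) (hsymm : ∀ x y, g x y = g y x)
    (hpos : ∀ x : V, x ≠ 0 → 0 < g x x) :
    ∃ b : Module.Basis (Fin (Module.finrank ℝ V)) ℝ V,
      ∀ i j, g (b i) (b j) = if i = j then 1 else 0 := by
  let core : InnerProductSpace.Core ℝ V :=
    { inner := fun x y => g x y
      conj_inner_symm := fun x y => by simpa using (hsymm x y).symm
      re_inner_nonneg := fun x => by
        by_cases h : x = 0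
        · simp [h]
        · exact le_of_lt (by simpa using hpos x h)
      definite := fun x hx => by
        by_contra h
        exact absurd hx (ne_of_gt (hpos x h))
      add_left := fun x y z => by simp
      smul_left := fun x y r => by simp }
  letI : NormedAddCommGroup V := core.toNormedAddCommGroup
  letI : InnerProductSpace ℝ V := InnerProductSpace.ofCore core.toCore
  obtain b := stdOrthonormalBasis ℝ V
  refine ⟨b.toBasis, ?_⟩
  intro i j
  have := orthonormal_iff_ite.1 b.orthonormal i j
  simp only [OrthonormalBasis.coe_toBasis]
  exact this

def modelBL {W : Type*} [AddCommGroup W] [Module ℝ W]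
    (g : LinearMap.BilinForm ℝ W) : LinearMap.BilinForm ℝ (W × W) :=
  (g.compl₁₂ (LinearMap.fst ℝ W W) (LinearMap.fst ℝ W W))
    - (g.compl₁₂ (LinearMap.snd ℝ W W) (LinearMap.snd ℝ W W))

lemma modelBL_apply {W : Type*} [AddCommGroup W] [Module ℝ W]
    (g : LinearMap.BilinForm ℝ W) (p q : W × W) :
    modelBL g p q = modelB g p q := by
  simp [modelBL, modelB]

lemma modelBL_nondeg {W : Type*} [AddCommGroup W] [Module ℝ W]
    (g : LinearMap.BilinForm ℝ W) (hpos : ∀ x : W, x ≠ 0 → 0 < g x x) :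
    (modelBL g).Nondegenerate := by
  constructor
  all_goals
    intro p hp
    have h1 : g p.1 p.1 = 0 := by
      have := hp (p.1, 0); simpa [modelBL_apply, modelB] using this
    have h2 : g p.2 p.2 = 0 := by
      have := hp (0, p.2); simpa [modelBL_apply, modelB] using this
    have hp1 : p.1 = 0 := by
      by_contra h; exact absurd h1 (ne_of_gt (hpos _ h))
    have hp2 : p.2 = 0 := by
      by_contra h; exact absurd h2 (ne_of_gt (hpos _ h))
    exact Prod.ext hp1 hp2

noncomputable def modelAF {W : Type*} [AddCommGroup W] [Module ℝ W]
    {A₁ A₂ : W → W → W → W → ℝ} (h₁ : IsML A₁) (h₂ : IsML A₂) (u v : W × W) :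
    LinearMap.BilinForm ℝ (W × W) :=
  LinearMap.mk₂ ℝ (fun z w => modelA A₁ A₂ u z w v)
    (fun z z' w => by
      simp only [modelA, acExt_add₂ h₁ h₂]; exact Complex.add_re _ _)
    (fun c z w => by
      simp only [modelA, acExt_smul₂ h₁ h₂, smul_eq_mul]
      exact Complex.re_ofReal_mul _ _)
    (fun z w w' => by
      simp only [modelA, acExt_add₃ h₁ h₂]; exact Complex.add_re _ _)
    (fun c z w => by
      simp only [modelA, acExt_smul₃ h₁ h₂, smul_eq_mul]
      exact Complex.re_ofReal_mul _ _)

lemma sum_eq_trace {V : Type*} [AddCommGroup V] [Module ℝ V] [FiniteDimensional ℝ V]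
    (B F : LinearMap.BilinForm ℝ V) (hB : B.Nondegenerate)
    {ι : Type*} [Fintype ι] [DecidableEq ι]
    (b : Module.Basis ι ℝ V) (ε : ι → ℝ) (hε : ∀ i, ε i * ε i = 1)
    (hob : ∀ i j, B (b i) (b j) = if i = j then ε i else 0) :
    ∑ i, ε i * F (b i) (b i) =
      LinearMap.trace ℝ V ((B.toDual hB).symm.toLinearMap ∘ₗ F) := by
  set N := (B.toDual hB).symm.toLinearMap ∘ₗ F with hNdef
  have hN : ∀ z w, B (N z) w = F z w := by
    intro z w
    have h1 : (B.toDual hB) (N z) = F z := by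
      simp [hNdef]
    have h2 := LinearMap.BilinForm.toDual_def hB (m := N z) (n := w)
    rw [← h2, h1]
  have key : ∀ i, ε i * F (b i) (b i) = b.repr (N (b i)) i := by
    intro i
    rw [← hN (b i) (b i)]
    set m := N (b i) with hm
    set c := b.repr m with hc
    have hexp : m = ∑ j, c j • b j := (b.sum_repr m).symm
    have : B m (b i) = c i * ε i := by
      conv_lhs => rw [hexp]
      rw [map_sum]
      simp only [LinearMap.coe_sum, Finset.sum_apply, map_smul, LinearMap.smul_apply,
        smul_eq_mul, hob]
      simp [Finset.sum_ite_eq]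
    rw [this]
    linear_combination c i * hε i
  rw [LinearMap.trace_eq_matrix_trace ℝ b, Matrix.trace]
  simp only [Matrix.diag, LinearMap.toMatrix_apply]
  simp_rw [key]

lemma sum_indep {V : Type*} [AddCommGroup V] [Module ℝ V] [FiniteDimensional ℝ V]
    (B F : LinearMap.BilinForm ℝ V) (hB : B.Nondegenerate)
    {ι ι' : Type*} [Fintype ι] [DecidableEq ι] [Fintype ι'] [DecidableEq ι']
    (b : Module.Basis ι ℝ V) (ε : ι → ℝ) (hε : ∀ i, ε i * ε i = 1)
    (hob : ∀ i j, B (b i) (b j) = if i = j then ε i else 0)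
    (c : Module.Basis ι' ℝ V) (δ : ι' → ℝ) (hδ : ∀ i, δ i * δ i = 1)
    (hoc : ∀ i j, B (c i) (c j) = if i = j then δ i else 0) :
    ∑ i, ε i * F (b i) (b i) = ∑ j, δ j * F (c j) (c j) := by
  rw [sum_eq_trace B F hB b ε hε hob, sum_eq_trace B F hB c δ hδ hoc]

lemma model_ricci {W : Type*} [AddCommGroup W] [Module ℝ W]
    (g : LinearMap.BilinForm ℝ W) {A₁ A₂ : W → W → W → W → ℝ}
    (h₁ : IsML A₁) (h₂ : IsML A₂)
    {n : ℕ} (e : Module.Basis (Fin n) ℝ W) {a₁ a₂ : ℝ}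
    (hs₁ : ∀ x y, (∑ k, A₁ x (e k) (e k) y) = a₁ * g x y)
    (hs₂ : ∀ x y, (∑ k, A₂ x (e k) (e k) y) = a₂ * g x y)
    (u v : W × W) :
    ∑ i : Fin n ⊕ Fin n,
        (Sum.elim (fun _ => (1 : ℝ)) (fun _ => (-1 : ℝ)) i) *
          modelA A₁ A₂ u ((e.prod e) i) ((e.prod e) i) v =
      2 * a₁ * modelB g u v + 2 * a₂ * modelB g (-u.2, u.1) v := by
  have hm : ∀ k, modelA A₁ A₂ u (e k, 0) (e k, 0) v =
      A₁ u.1 (e k) (e k) v.1 - A₂ u.2 (e k) (e k) v.1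
        - A₂ u.1 (e k) (e k) v.2 - A₁ u.2 (e k) (e k) v.2 := by
    intro k
    simp only [modelA, acExt]
    simp only [acx_zero₂ h₁ h₂, acx_zero₃ h₁ h₂]
    simp [acx]
    ring
  have hm' : ∀ k, modelA A₁ A₂ u (0, e k) (0, e k) v =
      -(A₁ u.1 (e k) (e k) v.1 - A₂ u.2 (e k) (e k) v.1
        - A₂ u.1 (e k) (e k) v.2 - A₁ u.2 (e k) (e k) v.2) := by
    intro k
    simp only [modelA, acExt]
    simp only [acx_zero₂ h₁ h₂, acx_zero₃ h₁ h₂]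
    simp [acx]
    ring
  rw [Fintype.sum_sum_type]
  simp only [Sum.elim_inl, Sum.elim_inr, one_mul, neg_one_mul, Module.Basis.prod_apply,
    LinearMap.coe_inl, LinearMap.coe_inr, Function.comp_apply]
  simp_rw [hm, hm']
  simp only [neg_neg, neg_sub]
  rw [show (∑ k : Fin n, (A₁ u.1 (e k) (e k) v.1 - A₂ u.2 (e k) (e k) v.1
        - A₂ u.1 (e k) (e k) v.2 - A₁ u.2 (e k) (e k) v.2)) =
      (∑ k, A₁ u.1 (e k) (e k) v.1) - (∑ k, A₂ u.2 (e k) (e k) v.1)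
        - (∑ k, A₂ u.1 (e k) (e k) v.2) - (∑ k, A₁ u.2 (e k) (e k) v.2) by
    rw [← Finset.sum_sub_distrib, ← Finset.sum_sub_distrib, ← Finset.sum_sub_distrib]]
  rw [hs₁, hs₂, hs₁, hs₂]
  simp only [modelB, map_neg, LinearMap.neg_apply]
  ring

lemma prod_basis_ortho {W : Type*} [AddCommGroup W] [Module ℝ W]
    (g : LinearMap.BilinForm ℝ W) {n : ℕ} (e : Module.Basis (Fin n) ℝ W)
    (he : ∀ i j, g (e i) (e j) = if i = j then 1 else 0) :
    ∀ i j : Fin n ⊕ Fin n,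
      modelBL g ((e.prod e) i) ((e.prod e) j) =
        if i = j then (Sum.elim (fun _ => (1 : ℝ)) (fun _ => (-1 : ℝ)) i) else 0 := by
  rintro (i | i) (j | j) <;>
    simp [modelBL_apply, modelB, Module.Basis.prod_apply, he] <;>
    split <;> simp_all

set_option maxHeartbeats 3200000 in
theorem statement9
    {V₀ : Type*} [AddCommGroup V₀] [Module ℝ V₀] [FiniteDimensional ℝ V₀]
    {W₀ : Type*} [AddCommGroup W₀] [Module ℝ W₀] [FiniteDimensional ℝ W₀]
    (g : LinearMap.BilinForm ℝ V₀)
    (hgsymm : ∀ x y, g x y = g y x)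
    (hgpos : ∀ x : V₀, x ≠ 0 → 0 < g x x)
    (g' : LinearMap.BilinForm ℝ W₀)
    (hg'symm : ∀ x y, g' x y = g' y x)
    (hg'pos : ∀ x : W₀, x ≠ 0 → 0 < g' x x)
    (A₁ A₂ : V₀ → V₀ → V₀ → V₀ → ℝ) (hA₁ : IsACT A₁) (hA₂ : IsACT A₂)
    (A₁' A₂' : W₀ → W₀ → W₀ → W₀ → ℝ) (hA₁' : IsACT A₁') (hA₂' : IsACT A₂')
    (a₁ a₂ : ℝ) (ha₂ : 0 < a₂)
    (hE₁ : IsEinsteinWith g A₁ a₁) (hE₂ : IsEinsteinWith g A₂ a₂)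
    (a₁' a₂' : ℝ) (ha₂' : 0 < a₂')
    (hE₁' : IsEinsteinWith g' A₁' a₁') (hE₂' : IsEinsteinWith g' A₂' a₂') :
    (∃ Θ : (V₀ × V₀) ≃ₗ[ℝ] (W₀ × W₀),
      (∀ p q : V₀ × V₀, modelB g' (Θ p) (Θ q) = modelB g p q) ∧
      (∀ p q r s : V₀ × V₀,
        modelA A₁' A₂' (Θ p) (Θ q) (Θ r) (Θ s) = modelA A₁ A₂ p q r s)) ↔
    (∃ (θ : V₀ ≃ₗ[ℝ] W₀) (T : V₀ →ₗ[ℝ] V₀),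
      (∀ v w, g (T v) w + g v (T w) = 0) ∧
      (∀ v : V₀, v ≠ 0 → g (T v) (T v) < g v v) ∧
      (∀ v w, g' (θ v) (θ w) = g v w - g (T v) (T w)) ∧
      (∀ v w x y : V₀,
        acx A₁' A₂' (θ v) (θ w) (θ x) (θ y) =
          acExt A₁ A₂ (v, T v) (w, T w) (x, T x) (y, T y))) := by
  constructor
  · intro h
    obtain ⟨Θ, hB, hA⟩ := h
    obtain ⟨e, he⟩ := exists_on_basis g hgsymm hgpos
    obtain ⟨e', he'⟩ := exists_on_basis g' hg'symm hg'pos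
    have hs₁ := hE₁ _ e he
    have hs₂ := hE₂ _ e he
    have hs₁' := hE₁' _ e' he'
    have hs₂' := hE₂' _ e' he'
    set bV := e.prod e with hbVdef
    set bW := e'.prod e' with hbWdef
    have hBnd' : (modelBL g').Nondegenerate := modelBL_nondeg g' hg'pos
    set mb := bV.map Θ with hmbdef
    have hbVo := prod_basis_ortho g e he
    have hbWo := prod_basis_ortho g' e' he'
    have hmbo : ∀ i j, modelBL g' (mb i) (mb j) =
        if i = j then (Sum.elim (fun _ => (1 : ℝ)) (fun _ => (-1 : ℝ)) i) else 0 := by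
      intro i j
      rw [hmbdef]
      simp only [Module.Basis.map_apply]
      rw [modelBL_apply, hB, ← modelBL_apply]
      exact hbVo i j
    have hε : ∀ i : Fin (Module.finrank ℝ V₀) ⊕ Fin (Module.finrank ℝ V₀),
        (Sum.elim (fun _ => (1 : ℝ)) (fun _ => (-1 : ℝ)) i) *
          (Sum.elim (fun _ => (1 : ℝ)) (fun _ => (-1 : ℝ)) i) = 1 := by
      rintro (i | i) <;> norm_num
    have hδ : ∀ i : Fin (Module.finrank ℝ W₀) ⊕ Fin (Module.finrank ℝ W₀),
        (Sum.elim (fun _ => (1 : ℝ)) (fun _ => (-1 : ℝ)) i) *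
          (Sum.elim (fun _ => (1 : ℝ)) (fun _ => (-1 : ℝ)) i) = 1 := by
      rintro (i | i) <;> norm_num
    set JV : (V₀ × V₀) →ₗ[ℝ] (V₀ × V₀) :=
      LinearMap.prod (-(LinearMap.snd ℝ V₀ V₀)) (LinearMap.fst ℝ V₀ V₀) with hJVdef
    set JW : (W₀ × W₀) →ₗ[ℝ] (W₀ × W₀) :=
      LinearMap.prod (-(LinearMap.snd ℝ W₀ W₀)) (LinearMap.fst ℝ W₀ W₀) with hJWdef
    have hJV : ∀ u : V₀ × V₀, JV u = (-u.2, u.1) := fun u => rfl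
    have hJW : ∀ u : W₀ × W₀, JW u = (-u.2, u.1) := fun u => rfl
    have hJVJV : ∀ u, JV (JV u) = -u := by
      intro u; rw [hJV, hJV]; apply Prod.ext <;> simp
    have hJWJW : ∀ u, JW (JW u) = -u := by
      intro u; rw [hJW, hJW]; apply Prod.ext <;> simp
    have master : ∀ u v : V₀ × V₀,
        2 * a₁ * modelB g u v + 2 * a₂ * modelB g (JV u) v
          = 2 * a₁' * modelB g' (Θ u) (Θ v) + 2 * a₂' * modelB g' (JW (Θ u)) (Θ v) := by
      intro u v
      have h1 := sum_indep (modelBL g') (modelAF hA₁'.1 hA₂'.1 (Θ u) (Θ v)) hBnd'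
        mb _ hε hmbo bW _ hδ hbWo
      have h2 : (∑ j, (Sum.elim (fun _ => (1 : ℝ)) (fun _ => (-1 : ℝ)) j) *
          (modelAF hA₁'.1 hA₂'.1 (Θ u) (Θ v)) (bW j) (bW j))
          = 2 * a₁' * modelB g' (Θ u) (Θ v) + 2 * a₂' * modelB g' (JW (Θ u)) (Θ v) := by
        have h2' := model_ricci g' hA₁'.1 hA₂'.1 e' hs₁' hs₂' (Θ u) (Θ v)
        rw [hJW]
        simpa [modelAF, LinearMap.mk₂_apply, hbWdef] using h2'
      have h3 : (∑ i, (Sum.elim (fun _ => (1 : ℝ)) (fun _ => (-1 : ℝ)) i) *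
          (modelAF hA₁'.1 hA₂'.1 (Θ u) (Θ v)) (mb i) (mb i))
          = 2 * a₁ * modelB g u v + 2 * a₂ * modelB g (JV u) v := by
        have hterm : ∀ i, (modelAF hA₁'.1 hA₂'.1 (Θ u) (Θ v)) (mb i) (mb i)
            = modelA A₁ A₂ u (bV i) (bV i) v := by
          intro i
          rw [hmbdef]
          simp only [Module.Basis.map_apply, modelAF, LinearMap.mk₂_apply]
          exact hA u (bV i) (bV i) v
        simp_rw [hterm]
        have h3' := model_ricci g hA₁.1 hA₂.1 e hs₁ hs₂ u v
        rw [hJV]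
        simpa [hbVdef] using h3'
      rw [← h3, h1, h2]
    have hkey : ∀ u : V₀ × V₀,
        a₂' • JW (Θ u) = (a₁ - a₁') • Θ u + a₂ • Θ (JV u) := by
      intro u
      have h0 : ∀ q : W₀ × W₀,
          modelBL g' (a₂' • JW (Θ u) - ((a₁ - a₁') • Θ u + a₂ • Θ (JV u))) q = 0 := by
        intro q
        obtain ⟨v, rfl⟩ := Θ.surjective q
        have hm := master u v
        have e1 : modelB g' (Θ u) (Θ v) = modelB g u v := hB u v
        have e2 : modelB g' (Θ (JV u)) (Θ v) = modelB g (JV u) v := hB _ v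
        simp only [map_sub, map_add, map_smul, LinearMap.sub_apply, LinearMap.add_apply,
          LinearMap.smul_apply, smul_eq_mul, modelBL_apply]
        rw [e1, e2]
        rw [e1] at hm
        linarith
      exact sub_eq_zero.mp (hBnd'.1 _ h0)
    have hJc : ∀ u : V₀ × V₀, JW (Θ u) = Θ (JV u) := by
      rcases subsingleton_or_nontrivial V₀ with hsub | hnt
      · intro u
        have hu : u = 0 := Subsingleton.elim _ _
        rw [hu]
        simp
      · set c := a₁ - a₁' with hcdef
        have hquad : ∀ u : V₀ × V₀,
            (a₂ ^ 2 - a₂' ^ 2 - c ^ 2) • Θ u = (2 * c * a₂) • Θ (JV u) := by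
          intro u
          have E1 := hkey u
          have E4 := hkey (JV u)
          rw [hJVJV u, map_neg] at E4
          have E2 : a₂' • JW (JW (Θ u)) = c • JW (Θ u) + a₂ • JW (Θ (JV u)) := by
            have := congrArg (fun x => JW x) E1
            simpa [map_add, map_smul] using this
          rw [hJWJW] at E2
          linear_combination (norm := module) (a₂' : ℝ) • E2 + c • E1 + a₂ • E4
        obtain ⟨w, hw⟩ := exists_ne (0 : V₀)
        have hΘne : Θ ((w, 0) : V₀ × V₀) ≠ 0 := by
          simp only [ne_eq, LinearEquiv.map_eq_zero_iff, Prod.mk_eq_zero]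
          tauto
        rcases eq_or_ne c 0 with hc0 | hc0
        · have hz : a₂ ^ 2 - a₂' ^ 2 - c ^ 2 = 0 := by
            rw [hc0]
            have hq := hquad ((w, 0) : V₀ × V₀)
            rw [hc0] at hq
            simp only [mul_zero, zero_mul, zero_smul] at hq
            rcases smul_eq_zero.mp hq with h | h
            · exact h
            · exact absurd h hΘne
          have ha : a₂' = a₂ := by nlinarith
          intro u
          have E1 := hkey u
          rw [ha, hc0, zero_smul, zero_add] at E1
          exact smul_right_injective _ (ne_of_gt ha₂) E1
        · exfalso
          have hne2 : (2 * c * a₂ : ℝ) ≠ 0 :=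
            mul_ne_zero (mul_ne_zero two_ne_zero hc0) (ne_of_gt ha₂)
          set K := (2 * c * a₂)⁻¹ * (a₂ ^ 2 - a₂' ^ 2 - c ^ 2) with hKdef
          have hJVK : ∀ u : V₀ × V₀, JV u = K • u := by
            intro u
            have h2 : Θ (JV u) = K • Θ u := by
              calc Θ (JV u) = (2 * c * a₂)⁻¹ • ((2 * c * a₂) • Θ (JV u)) :=
                    (inv_smul_smul₀ hne2 _).symm
                _ = (2 * c * a₂)⁻¹ • ((a₂ ^ 2 - a₂' ^ 2 - c ^ 2) • Θ u) := by
                    rw [← hquad u]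
                _ = K • Θ u := by rw [hKdef, smul_smul]
            apply Θ.injective
            rw [map_smul]
            exact h2
          have h4 : (K * K + 1) • ((w, 0) : V₀ × V₀) = 0 := by
            have h5 : -((w, 0) : V₀ × V₀) = (K * K) • ((w, 0) : V₀ × V₀) := by
              calc -((w, 0) : V₀ × V₀) = JV (JV ((w, 0) : V₀ × V₀)) := (hJVJV _).symm
                _ = K • (JV ((w, 0) : V₀ × V₀)) := by rw [hJVK (JV ((w, 0) : V₀ × V₀))]
                _ = K • (K • ((w, 0) : V₀ × V₀)) := by rw [hJVK ((w, 0) : V₀ × V₀)]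
                _ = (K * K) • ((w, 0) : V₀ × V₀) := smul_smul _ _ _
            rw [add_smul, one_smul, ← h5]
            simp
          rcases smul_eq_zero.mp h4 with h | h
          · nlinarith [sq_nonneg K, h]
          · rw [Prod.mk_eq_zero] at h
            exact hw h.1
    -- construction of θ and T
    set σ : W₀ →ₗ[ℝ] V₀ × V₀ := Θ.symm.toLinearMap ∘ₗ LinearMap.inl ℝ W₀ W₀ with hσdef
    have hσ : ∀ w : W₀, σ w = Θ.symm ((w, 0) : W₀ × W₀) := fun w => rfl
    set π : W₀ →ₗ[ℝ] V₀ := LinearMap.fst ℝ V₀ V₀ ∘ₗ σ with hπdef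
    have hπ : ∀ w : W₀, π w = (Θ.symm ((w, 0) : W₀ × W₀)).1 := fun w => rfl
    have hπinj : Function.Injective π := by
      rw [injective_iff_map_eq_zero]
      intro w hw
      by_contra hne
      set p := Θ.symm ((w, 0) : W₀ × W₀) with hpdef
      have hΘp : Θ p = ((w, 0) : W₀ × W₀) := Θ.apply_symm_apply _
      have hBp := hB p p
      rw [hΘp] at hBp
      have hp1 : p.1 = 0 := hw
      have hg'w := hg'pos w hne
      have hgp2 : 0 ≤ g p.2 p.2 := by
        rcases eq_or_ne p.2 0 with h | h
        · simp [h]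
        · exact le_of_lt (hgpos _ h)
      simp only [modelB, hp1, map_zero, LinearMap.zero_apply, zero_sub] at hBp
      linarith
    have hrank : Module.finrank ℝ W₀ = Module.finrank ℝ V₀ := by
      have h1 := Θ.finrank_eq
      rw [Module.finrank_prod, Module.finrank_prod] at h1
      omega
    set φ := LinearMap.linearEquivOfInjective π hπinj hrank with hφdef
    have hφ : ∀ w : W₀, φ w = π w := by
      intro w
      rw [hφdef]
      simp [LinearMap.linearEquivOfInjective_apply]
    set T0 : V₀ →ₗ[ℝ] V₀ :=
      LinearMap.snd ℝ V₀ V₀ ∘ₗ σ ∘ₗ (φ.symm : V₀ ≃ₗ[ℝ] W₀).toLinearMap with hT0def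
    have hT0 : ∀ v : V₀, T0 v = (Θ.symm ((φ.symm v, 0) : W₀ × W₀)).2 := fun v => rfl
    have hkey1 : ∀ v : V₀, Θ ((v, T0 v) : V₀ × V₀) = ((φ.symm v, 0) : W₀ × W₀) := by
      intro v
      have h1 : Θ.symm ((φ.symm v, 0) : W₀ × W₀) = ((v, T0 v) : V₀ × V₀) := by
        apply Prod.ext
        · have h2 : (Θ.symm ((φ.symm v, 0) : W₀ × W₀)).1 = π (φ.symm v) := rfl
          rw [h2, ← hφ (φ.symm v)]
          exact φ.apply_symm_apply v
        · rfl
      rw [← h1, Θ.apply_symm_apply]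
    have hkey2 : ∀ v : V₀, Θ (JV ((v, T0 v) : V₀ × V₀)) = ((0, φ.symm v) : W₀ × W₀) := by
      intro v
      rw [← hJc, hkey1, hJW]
      simp
    refine ⟨φ.symm, T0, ?_, ?_, ?_, ?_⟩
    · -- skew
      intro v w
      have h3 := hB ((v, T0 v) : V₀ × V₀) (JV ((w, T0 w) : V₀ × V₀))
      rw [hkey1, hkey2] at h3
      simp only [modelB, hJV, map_zero, LinearMap.zero_apply, map_neg,
        LinearMap.neg_apply] at h3
      linarith
    · -- contraction
      intro v hv
      have hθne : (φ.symm v : W₀) ≠ 0 := by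
        simp only [ne_eq, LinearEquiv.map_eq_zero_iff]
        exact hv
      have h3 := hB ((v, T0 v) : V₀ × V₀) ((v, T0 v) : V₀ × V₀)
      rw [hkey1] at h3
      simp only [modelB, map_zero, LinearMap.zero_apply] at h3
      have := hg'pos _ hθne
      linarith
    · -- metric
      intro v w
      have h3 := hB ((v, T0 v) : V₀ × V₀) ((w, T0 w) : V₀ × V₀)
      rw [hkey1, hkey1] at h3
      simp only [modelB, map_zero, LinearMap.zero_apply] at h3
      linarith
    · -- curvature
      intro v w x y
      have hC : ∀ p q r s : V₀ × V₀,
          acExt A₁' A₂' (Θ p) (Θ q) (Θ r) (Θ s) = acExt A₁ A₂ p q r s := by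
        intro p q r s
        apply Complex.ext
        · have := hA p q r s
          simpa [modelA] using this
        · have h1 : acExt A₁' A₂' ((-(Θ p).2, (Θ p).1) : W₀ × W₀) (Θ q) (Θ r) (Θ s)
              = Complex.I * acExt A₁' A₂' (Θ p) (Θ q) (Θ r) (Θ s) := by
            simpa using acExt_J₁ hA₁'.1 hA₂'.1 (Θ p).1 (Θ p).2 (Θ q) (Θ r) (Θ s)
          have h2 : acExt A₁ A₂ ((-p.2, p.1) : V₀ × V₀) q r s
              = Complex.I * acExt A₁ A₂ p q r s := by
            simpa using acExt_J₁ hA₁.1 hA₂.1 p.1 p.2 q r s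
          have h4 : ((-(Θ p).2, (Θ p).1) : W₀ × W₀) = Θ ((-p.2, p.1) : V₀ × V₀) := by
            rw [← hJV, ← hJW]
            exact hJc p
          have e1 : (acExt A₁' A₂' (Θ p) (Θ q) (Θ r) (Θ s)).im
              = - (acExt A₁' A₂' (Θ ((-p.2, p.1) : V₀ × V₀)) (Θ q) (Θ r) (Θ s)).re := by
            rw [← h4, h1]
            simp
          have e2 : (acExt A₁ A₂ p q r s).im
              = - (acExt A₁ A₂ ((-p.2, p.1) : V₀ × V₀) q r s).re := by
            rw [h2]
            simp
          rw [e1, e2]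
          have e3 := hA ((-p.2, p.1) : V₀ × V₀) q r s
          simp only [modelA] at e3
          rw [e3]
      have h6 := hC ((v, T0 v) : V₀ × V₀) ((w, T0 w) : V₀ × V₀)
        ((x, T0 x) : V₀ × V₀) ((y, T0 y) : V₀ × V₀)
      rw [hkey1, hkey1, hkey1, hkey1] at h6
      rw [← h6, acExt_real hA₁'.1 hA₂'.1]
  · rintro ⟨θ, T, hskew, hcontr, hmet, hcurv⟩
    set Φ : (V₀ × V₀) →ₗ[ℝ] (V₀ × V₀) :=
      LinearMap.prod ((LinearMap.fst ℝ V₀ V₀) - T ∘ₗ (LinearMap.snd ℝ V₀ V₀))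
        ((T ∘ₗ (LinearMap.fst ℝ V₀ V₀)) + (LinearMap.snd ℝ V₀ V₀)) with hΦdef
    have hΦ : ∀ p : V₀ × V₀, Φ p = (p.1 - T p.2, T p.1 + p.2) := fun p => rfl
    have hΦinj : Function.Injective Φ := by
      rw [injective_iff_map_eq_zero]
      intro p hp
      rw [hΦ] at hp
      have h1 : p.1 - T p.2 = 0 := congrArg Prod.fst hp
      have h2 : T p.1 + p.2 = 0 := congrArg Prod.snd hp
      have hp2 : p.2 = -T p.1 := eq_neg_of_add_eq_zero_right h2
      have hp1 : p.1 = - T (T p.1) := by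
        have h3 := sub_eq_zero.mp h1
        rw [hp2] at h3; simpa [map_neg] using h3
      have hz : p.1 = 0 := by
        by_contra hne
        have hc := hcontr p.1 hne
        have hskew1 := hskew (T p.1) p.1
        have h4 : g p.1 p.1 = - g (T (T p.1)) p.1 := by
          nth_rewrite 1 [hp1]
          simp [map_neg]
        linarith
      have hz2 : p.2 = 0 := by rw [hp2, hz, map_zero, neg_zero]
      exact Prod.ext hz hz2
    set ΦE := LinearEquiv.ofInjectiveEndo Φ hΦinj with hΦEdef
    set θ2 : (V₀ × V₀) ≃ₗ[ℝ] (W₀ × W₀) := θ.prodCongr θ with hθ2def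
    have hθ2 : ∀ p : V₀ × V₀, θ2 p = (θ p.1, θ p.2) := fun p => rfl
    have hΦE : ∀ p, Φ (ΦE.symm p) = p := fun p => ΦE.apply_symm_apply p
    refine ⟨ΦE.symm.trans θ2, ?_, ?_⟩
    · intro p q
      have hΘp : (ΦE.symm.trans θ2) p = θ2 (ΦE.symm p) := rfl
      have hΘq : (ΦE.symm.trans θ2) q = θ2 (ΦE.symm q) := rfl
      set u := ΦE.symm p with hu
      set v := ΦE.symm q with hv
      rw [hΘp, hΘq, ← hΦE p, ← hΦE q, ← hu, ← hv]
      rw [hθ2, hθ2, hΦ, hΦ]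
      simp only [modelB, map_add, map_sub, LinearMap.add_apply, LinearMap.sub_apply]
      rw [hmet u.1 v.1, hmet u.2 v.2]
      have h1 := hskew u.1 v.2
      have h2 := hskew u.2 v.1
      linarith
    · intro p q r s
      have hΘ : ∀ p, (ΦE.symm.trans θ2) p = θ2 (ΦE.symm p) := fun _ => rfl
      simp only [hΘ]
      conv_rhs => rw [← hΦE p, ← hΦE q, ← hΦE r, ← hΦE s]
      set u := ΦE.symm p
      set v := ΦE.symm q
      set x := ΦE.symm r
      set y := ΦE.symm s
      -- suffices to prove the complex identity
      suffices hC : acExt A₁' A₂' (θ2 u) (θ2 v) (θ2 x) (θ2 y)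
          = acExt A₁ A₂ (Φ u) (Φ v) (Φ x) (Φ y) by
        simp only [modelA, hC]
      clear_value u v x y
      clear p q r s
      have hθJ : ∀ a b : V₀, θ2 ((-b, a) : V₀ × V₀) = ((-(θ b), θ a) : W₀ × W₀) := by
        intro a b; rw [hθ2]; simp
      have hΦJ : ∀ a b : V₀, Φ ((-b, a) : V₀ × V₀)
          = ((-(Φ (a, b)).2, (Φ (a, b)).1) : V₀ × V₀) := by
        intro a b
        rw [hΦ, hΦ]
        apply Prod.ext <;> simp [map_neg] <;> abel
      have base : ∀ a b c d : V₀,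
          acExt A₁' A₂' (θ2 (a, 0)) (θ2 (b, 0)) (θ2 (c, 0)) (θ2 (d, 0))
            = acExt A₁ A₂ (Φ (a, 0)) (Φ (b, 0)) (Φ (c, 0)) (Φ (d, 0)) := by
        intro a b c d
        have h1 : ∀ a : V₀, θ2 ((a, 0) : V₀ × V₀) = ((θ a, 0) : W₀ × W₀) := by
          intro a; rw [hθ2]; simp
        have h2 : ∀ a : V₀, Φ ((a, 0) : V₀ × V₀) = (a, T a) := by
          intro a; rw [hΦ]; simp
        rw [h1, h1, h1, h1, h2, h2, h2, h2, acExt_real hA₁'.1 hA₂'.1]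
        exact hcurv a b c d
      have step4 : ∀ (a b c : V₀) (s : V₀ × V₀),
          acExt A₁' A₂' (θ2 (a, 0)) (θ2 (b, 0)) (θ2 (c, 0)) (θ2 s)
            = acExt A₁ A₂ (Φ (a, 0)) (Φ (b, 0)) (Φ (c, 0)) (Φ s) := by
        intro a b c s
        have e1 := expand_slot (fun t => acExt A₁' A₂' (θ2 (a, 0)) (θ2 (b, 0)) (θ2 (c, 0)) (θ2 t))
          (fun p p' => by simp only [map_add]; exact acExt_add₄ hA₁'.1 hA₂'.1 _ _ _ _ _)
          (fun x y => by
            simp only [hθJ, hθ2]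
            exact acExt_J₄ hA₁'.1 hA₂'.1 (θ x) (θ y) _ _ _) s
        have e2 := expand_slot (fun t => acExt A₁ A₂ (Φ (a, 0)) (Φ (b, 0)) (Φ (c, 0)) (Φ t))
          (fun p p' => by simp only [map_add]; exact acExt_add₄ hA₁.1 hA₂.1 _ _ _ _ _)
          (fun x y => by
            simp only [hΦJ]
            have := acExt_J₄ hA₁.1 hA₂.1 (Φ (x, y)).1 (Φ (x, y)).2
              (Φ (a, 0)) (Φ (b, 0)) (Φ (c, 0))
            simpa using this) s
        rw [e1, e2, base, base]
      have step3 : ∀ (a b : V₀) (r s : V₀ × V₀),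
          acExt A₁' A₂' (θ2 (a, 0)) (θ2 (b, 0)) (θ2 r) (θ2 s)
            = acExt A₁ A₂ (Φ (a, 0)) (Φ (b, 0)) (Φ r) (Φ s) := by
        intro a b r s
        have e1 := expand_slot (fun t => acExt A₁' A₂' (θ2 (a, 0)) (θ2 (b, 0)) (θ2 t) (θ2 s))
          (fun p p' => by simp only [map_add]; exact acExt_add₃ hA₁'.1 hA₂'.1 _ _ _ _ _)
          (fun x y => by
            simp only [hθJ, hθ2]
            exact acExt_J₃ hA₁'.1 hA₂'.1 (θ x) (θ y) _ _ _) r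
        have e2 := expand_slot (fun t => acExt A₁ A₂ (Φ (a, 0)) (Φ (b, 0)) (Φ t) (Φ s))
          (fun p p' => by simp only [map_add]; exact acExt_add₃ hA₁.1 hA₂.1 _ _ _ _ _)
          (fun x y => by
            simp only [hΦJ]
            have := acExt_J₃ hA₁.1 hA₂.1 (Φ (x, y)).1 (Φ (x, y)).2
              (Φ (a, 0)) (Φ (b, 0)) (Φ s)
            simpa using this) r
        rw [e1, e2, step4, step4]
      have step2 : ∀ (a : V₀) (q r s : V₀ × V₀),
          acExt A₁' A₂' (θ2 (a, 0)) (θ2 q) (θ2 r) (θ2 s)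
            = acExt A₁ A₂ (Φ (a, 0)) (Φ q) (Φ r) (Φ s) := by
        intro a q r s
        have e1 := expand_slot (fun t => acExt A₁' A₂' (θ2 (a, 0)) (θ2 t) (θ2 r) (θ2 s))
          (fun p p' => by simp only [map_add]; exact acExt_add₂ hA₁'.1 hA₂'.1 _ _ _ _ _)
          (fun x y => by
            simp only [hθJ, hθ2]
            exact acExt_J₂ hA₁'.1 hA₂'.1 (θ x) (θ y) _ _ _) q
        have e2 := expand_slot (fun t => acExt A₁ A₂ (Φ (a, 0)) (Φ t) (Φ r) (Φ s))
          (fun p p' => by simp only [map_add]; exact acExt_add₂ hA₁.1 hA₂.1 _ _ _ _ _)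
          (fun x y => by
            simp only [hΦJ]
            have := acExt_J₂ hA₁.1 hA₂.1 (Φ (x, y)).1 (Φ (x, y)).2
              (Φ (a, 0)) (Φ r) (Φ s)
            simpa using this) q
        rw [e1, e2, step3, step3]
      have step1 : ∀ (p q r s : V₀ × V₀),
          acExt A₁' A₂' (θ2 p) (θ2 q) (θ2 r) (θ2 s)
            = acExt A₁ A₂ (Φ p) (Φ q) (Φ r) (Φ s) := by
        intro p q r s
        have e1 := expand_slot (fun t => acExt A₁' A₂' (θ2 t) (θ2 q) (θ2 r) (θ2 s))
          (fun p p' => by simp only [map_add]; exact acExt_add₁ hA₁'.1 hA₂'.1 _ _ _ _ _)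
          (fun x y => by
            simp only [hθJ, hθ2]
            exact acExt_J₁ hA₁'.1 hA₂'.1 (θ x) (θ y) _ _ _) p
        have e2 := expand_slot (fun t => acExt A₁ A₂ (Φ t) (Φ q) (Φ r) (Φ s))
          (fun p p' => by simp only [map_add]; exact acExt_add₁ hA₁.1 hA₂.1 _ _ _ _ _)
          (fun x y => by
            simp only [hΦJ]
            have := acExt_J₁ hA₁.1 hA₂.1 (Φ (x, y)).1 (Φ (x, y)).2
              (Φ q) (Φ r) (Φ s)
            simpa using this) p
        rw [e1, e2, step2, step2]
      exact step1 u v x y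
end

section
/- Let ⟨·,·⟩ be a nondegenerate symmetric bilinear form on a finite-dimensional real vector space V and let J : V → V be a linear map which is self-adjoint (⟨Jx, y⟩ = ⟨x, Jy⟩ for all x, y) and satisfies J² = −id. Then dim V is even, say dim V = 2p, and there exists a basis e₁⁺, e₁⁻, …, e_p⁺, e_p⁻ of V such that ⟨e_i⁺, e_j⁺⟩ = δ_ij, ⟨e_i⁻, e_j⁻⟩ = −δ_ij, ⟨e_i⁺, e_j⁻⟩ = 0, J e_i⁺ = e_i⁻, and J e_i⁻ = −e_i⁺ for all i, j. -/
open TensorProduct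

theorem statement10
    {V : Type*} [AddCommGroup V] [Module ℝ V] [FiniteDimensional ℝ V]
    (B : LinearMap.BilinForm ℝ V)
    (hBsymm : ∀ x y, B x y = B y x)
    (hBnondeg : ∀ x, (∀ y, B x y = 0) → x = 0)
    (J : V →ₗ[ℝ] V)
    (hJsa : ∀ x y, B (J x) y = B x (J y))
    (hJ2 : J ∘ₗ J = - LinearMap.id) :
    ∃ p : ℕ, Module.finrank ℝ V = 2 * p ∧
      ∃ b : Module.Basis (Fin p ⊕ Fin p) ℝ V,
        (∀ i j, B (b (Sum.inl i)) (b (Sum.inl j)) = if i = j then 1 else 0) ∧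
        (∀ i j, B (b (Sum.inr i)) (b (Sum.inr j)) = if i = j then -1 else 0) ∧
        (∀ i j, B (b (Sum.inl i)) (b (Sum.inr j)) = 0) ∧
        (∀ i, J (b (Sum.inl i)) = b (Sum.inr i)) ∧
        (∀ i, J (b (Sum.inr i)) = - b (Sum.inl i)) := by
  have hJJ : ∀ v : V, J (J v) = -v := fun v => by
    have := LinearMap.ext_iff.mp hJ2 v
    simpa using this
  have hBJJ : ∀ x y, B (J x) (J y) = - B x y := fun x y => by
    rw [hJsa, hJJ, map_neg]
  -- complex module structure
  letI : Module ℂ V :=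
    { smul := fun c v => c.re • v + c.im • J v
      one_smul := fun v => by
        show (1:ℂ).re • v + (1:ℂ).im • J v = v
        simp
      mul_smul := fun c d v => by
        show (c*d).re • v + (c*d).im • J v
          = c.re • (d.re • v + d.im • J v) + c.im • J (d.re • v + d.im • J v)
        simp only [Complex.mul_re, Complex.mul_im, map_add, map_smul, hJJ,
          smul_add, smul_smul, smul_neg, sub_smul, add_smul]
        module
      smul_zero := fun c => by
        show c.re • (0:V) + c.im • J 0 = 0
        simp
      smul_add := fun c v w => by
        show c.re • (v + w) + c.im • J (v + w)
          = (c.re • v + c.im • J v) + (c.re • w + c.im • J w)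
        simp only [map_add, smul_add]
        abel
      add_smul := fun c d v => by
        show (c+d).re • v + (c+d).im • J v
          = (c.re • v + c.im • J v) + (d.re • v + d.im • J v)
        simp only [Complex.add_re, Complex.add_im, add_smul]
        abel
      zero_smul := fun v => by
        show (0:ℂ).re • v + (0:ℂ).im • J v = 0
        simp }
  have hsmul : ∀ (c : ℂ) (v : V), c • v = c.re • v + c.im • J v := fun _ _ => rfl
  letI : IsScalarTower ℝ ℂ V := ⟨fun r c v => by
    rw [hsmul, hsmul, Complex.real_smul]
    simp [Complex.mul_re, Complex.mul_im, smul_add, mul_smul]⟩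
  haveI : FiniteDimensional ℂ V := Module.Finite.of_restrictScalars_finite ℝ ℂ V
  -- complex bilinear form
  let C : LinearMap.BilinForm ℂ V := LinearMap.mk₂ ℂ
    (fun x y => (B x y : ℂ) - (B (J x) y : ℂ) * Complex.I)
    (fun x x' y => by push_cast [map_add, LinearMap.add_apply]; ring)
    (fun c x y => by
      rw [hsmul]
      push_cast [map_add, map_smul, LinearMap.add_apply, LinearMap.smul_apply, hJJ,
        LinearMap.neg_apply, map_neg]
      apply Complex.ext <;> simp <;> ring)
    (fun x y y' => by push_cast [map_add]; ring)
    (fun c x y => by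
      rw [hsmul]
      push_cast [map_add, map_smul, hBJJ, ← hJsa]
      apply Complex.ext <;> simp <;> ring)
  have hCval : ∀ x y, C x y = (B x y : ℂ) - (B (J x) y : ℂ) * Complex.I := fun _ _ => rfl
  have hCsymm : LinearMap.IsSymm C := by
    refine ⟨fun x y => ?_⟩
    rw [RingHom.id_apply, hCval, hCval, hJsa, hBsymm x y, hBsymm (J y) x]
  haveI : Invertible (2:ℂ) := invertibleOfNonzero two_ne_zero
  obtain ⟨v, hv⟩ := LinearMap.BilinForm.exists_orthogonal_basis hCsymm
  let p := Module.finrank ℂ V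
  have hvo : ∀ i j, i ≠ j → C (v i) (v j) = 0 := fun i j hij => hv hij
  -- diagonal entries are nonzero
  have hdne : ∀ i, C (v i) (v i) ≠ 0 := by
    intro i h0
    have hCz : ∀ y, C (v i) y = 0 := by
      have : (C (v i) : V →ₗ[ℂ] ℂ) = 0 := by
        apply v.ext
        intro j
        by_cases hij : i = j
        · subst hij; simpa using h0
        · simpa using hvo i j hij
      intro y; rw [this]; rfl
    have : v i = 0 := by
      apply hBnondeg
      intro y
      have := congrArg Complex.re (hCz y)
      simpa [hCval] using this
    exact v.ne_zero i this
  -- normalize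
  choose s hs using fun i => IsAlgClosed.exists_pow_nat_eq (k := ℂ) (C (v i) (v i)) zero_lt_two
  have hsne : ∀ i, s i ≠ 0 := fun i h => hdne i (by rw [← hs i, h]; ring)
  let u : Fin p → ℂˣ := fun i => (Units.mk0 (s i) (hsne i))⁻¹
  let f : Module.Basis (Fin p) ℂ V := v.unitsSMul u
  have hf : ∀ i, f i = (s i)⁻¹ • v i := fun i => by
    simp [f, u, Module.Basis.unitsSMul_apply, Units.smul_def, Units.val_inv_eq_inv_val]
  have hCf : ∀ i j, C (f i) (f j) = if i = j then 1 else 0 := by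
    intro i j
    rw [hf, hf]
    simp only [map_smul, LinearMap.map_smul₂, LinearMap.smul_apply, smul_eq_mul]
    by_cases hij : i = j
    · subst hij
      rw [if_pos rfl, ← hs i]
      field_simp
      rw [div_self (hsne i)]
    · rw [if_neg hij, hvo i j hij, mul_zero, mul_zero]
  -- real basis
  let e : Fin 2 × Fin p ≃ Fin p ⊕ Fin p :=
    (finTwoEquiv.prodCongr (Equiv.refl (Fin p))).trans (Equiv.boolProdEquivSum (Fin p))
  let b : Module.Basis (Fin p ⊕ Fin p) ℝ V := (Complex.basisOneI.smulTower f).reindex e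
  have hbl : ∀ i, b (Sum.inl i) = f i := by
    intro i
    rw [Module.Basis.reindex_apply]
    have : e.symm (Sum.inl i) = (0, i) := rfl
    rw [this, Module.Basis.smulTower_apply]
    simp [hsmul]
  have hbr : ∀ i, b (Sum.inr i) = J (f i) := by
    intro i
    rw [Module.Basis.reindex_apply]
    have : e.symm (Sum.inr i) = (1, i) := rfl
    rw [this, Module.Basis.smulTower_apply]
    simp [hsmul]
  have hBff : ∀ i j, B (f i) (f j) = if i = j then 1 else 0 := by
    intro i j
    have := congrArg Complex.re (hCf i j)
    simp only [hCval] at this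
    simpa [apply_ite Complex.re] using this
  have hBJff : ∀ i j, B (J (f i)) (f j) = 0 := by
    intro i j
    have := congrArg Complex.im (hCf i j)
    rw [hCval] at this
    simp only [Complex.sub_im, Complex.ofReal_im, Complex.mul_im, Complex.ofReal_re,
      Complex.I_re, Complex.I_im, mul_zero, mul_one, zero_sub, zero_mul, add_zero,
      apply_ite Complex.im, Complex.one_im, Complex.zero_im, ite_self] at this
    linarith
  refine ⟨p, ?_, b, ?_, ?_, ?_, ?_, ?_⟩
  · rw [← Module.finrank_mul_finrank ℝ ℂ V, Complex.finrank_real_complex]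
  · intro i j; rw [hbl, hbl]; exact hBff i j
  · intro i j; rw [hbr, hbr, hBJJ, hBff]
    by_cases hij : i = j <;> simp [hij]
  · intro i j; rw [hbl, hbr, ← hJsa]; exact hBJff i j
  · intro i; rw [hbl, hbr]
  · intro i; rw [hbr, hbl, hJJ]
end

section
/- Let (V, ⟨·,·⟩, A) be a Jacobi–Ricci commuting model with Ricci operator ρ = 2a₁·id + 2a₂·J, where J : V → V is self-adjoint, J² = −id, and A(Jx,y,z,w) = A(x,Jy,z,w) = A(x,y,Jz,w) = A(x,y,z,Jw) for all x, y, z, w. Let V₊ be a subspace on which ⟨·,·⟩ is positive definite such that V = V₊ ⊕ JV₊ and ⟨V₊, JV₊⟩ = 0, and let g be the restriction of ⟨·,·⟩ to V₊. Define A₁(x,y,z,w) := A(x,y,z,w) and A₂(x,y,z,w) := −A(Jx,y,z,w) for x, y, z, w ∈ V₊. Then A₁ and A₂ are algebraic curvature tensors on V₊ which are Einstein on (V₊, g) with Einstein constants a₁ and a₂ respectively: for every orthonormal basis {e_k} of (V₊, g), Σ_k A₁(x, e_k, e_k, y) = a₁·g(x, y) and Σ_k A₂(x, e_k, e_k, y)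 = a₂·g(x, y) for all x, y ∈ V₊. -/
open TensorProduct

lemma aux_repr {V : Type*} [AddCommGroup V] [Module ℝ V] {ι : Type*} [Fintype ι] [DecidableEq ι]
    (B : LinearMap.BilinForm ℝ V) (bb : Module.Basis ι ℝ V) (ε : ι → ℝ)
    (hgram : ∀ i j, B (bb i) (bb j) = if i = j then ε i else 0)
    (hε : ∀ i, ε i * ε i = 1) (x : V) (i : ι) :
    bb.repr x i = ε i * B x (bb i) := by
  have h : B x (bb i) = bb.repr x i * ε i := by
    conv_lhs => rw [← bb.sum_repr x]
    simp only [map_sum, LinearMap.sum_apply, map_smul, LinearMap.smul_apply, smul_eq_mul,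
      hgram, mul_ite, mul_zero]
    simp
  rw [h, mul_comm (bb.repr x i), ← mul_assoc, hε, one_mul]

lemma aux_trace {V : Type*} [AddCommGroup V] [Module ℝ V] [FiniteDimensional ℝ V]
    {ι : Type*} [Fintype ι] [DecidableEq ι]
    (B : LinearMap.BilinForm ℝ V) (bb : Module.Basis ι ℝ V) (ε : ι → ℝ)
    (hgram : ∀ i j, B (bb i) (bb j) = if i = j then ε i else 0)
    (hε : ∀ i, ε i * ε i = 1) (T : V →ₗ[ℝ] V) :
    LinearMap.trace ℝ V T = ∑ i, ε i * B (T (bb i)) (bb i) := by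
  rw [LinearMap.trace_eq_matrix_trace ℝ bb T, Matrix.trace]
  simp only [Matrix.diag, LinearMap.toMatrix_apply]
  exact Finset.sum_congr rfl fun i _ => aux_repr B bb ε hgram hε _ i

theorem statement15
    {V : Type*} [AddCommGroup V] [Module ℝ V] [FiniteDimensional ℝ V]
    (B : LinearMap.BilinForm ℝ V)
    (hBsymm : ∀ x y, B x y = B y x)
    (hBnondeg : ∀ x, (∀ y, B x y = 0) → x = 0)
    (A : V → V → V → V → ℝ) (hA : IsACT A)
    (R : V →ₗ[ℝ] V →ₗ[ℝ] V →ₗ[ℝ] V)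
    (hR : ∀ x y z w, B (R x y z) w = A x y z w)
    (ρ : V →ₗ[ℝ] V)
    (hρ : ∀ x y, B (ρ x) y = ricciForm R x y)
    (hJR : JRComm A ρ)
    (a₁ a₂ : ℝ) (J : V →ₗ[ℝ] V)
    (hρeq : ρ = (2 * a₁) • LinearMap.id + (2 * a₂) • J)
    (hJsa : ∀ x y, B (J x) y = B x (J y))
    (hJ2 : J ∘ₗ J = - LinearMap.id)
    (hAJ : ∀ x y z w : V,
      A (J x) y z w = A x (J y) z w ∧
      A x (J y) z w = A x y (J z) w ∧
      A x y (J z) w = A x y z (J w))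
    (Vplus : Submodule ℝ V)
    (hpos : ∀ v ∈ Vplus, v ≠ 0 → 0 < B v v)
    (hcompl : IsCompl Vplus (Vplus.map J))
    (horth : ∀ v ∈ Vplus, ∀ w ∈ Vplus, B v (J w) = 0) :
    IsACT (fun v w x y : Vplus => A (v : V) (w : V) (x : V) (y : V)) ∧
    IsACT (fun v w x y : Vplus => -A (J (v : V)) (w : V) (x : V) (y : V)) ∧
    (∀ (n : ℕ) (b : Module.Basis (Fin n) ℝ Vplus),
      (∀ i j, B ((b i : V)) ((b j : V)) = if i = j then 1 else 0) →
      ∀ x y : Vplus,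
        (∑ k, A (x : V) ((b k : V)) ((b k : V)) (y : V)) = a₁ * B ((x : V)) ((y : V))) ∧
    (∀ (n : ℕ) (b : Module.Basis (Fin n) ℝ Vplus),
      (∀ i j, B ((b i : V)) ((b j : V)) = if i = j then 1 else 0) →
      ∀ x y : Vplus,
        (∑ k, -A (J (x : V)) ((b k : V)) ((b k : V)) (y : V)) =
          a₂ * B ((x : V)) ((y : V))) := by
  obtain ⟨⟨a1, a2, a3, a4, a5, a6, a7, a8⟩, s1, s2, s3⟩ := hA
  -- basic consequences
  have hJ2' : ∀ x, J (J x) = -x := by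
    intro x
    have := LinearMap.ext_iff.mp hJ2 x
    simpa using this
  have hneg4 : ∀ x y z w, A x y z (-w) = - A x y z w := by
    intro x y z w
    rw [← neg_one_smul ℝ w, a8]; ring
  have hmove : ∀ x y z w, A (J x) y z w = A x y z (J w) := fun x y z w =>
    ((hAJ x y z w).1.trans (hAJ x y z w).2.1).trans (hAJ x y z w).2.2
  have hJAA : ∀ z u y, A (J z) u y (J z) = - A z u y z := by
    intro z u y
    rw [hmove, hJ2', hneg4]
  -- pointwise Ricci symmetry
  have ricsym : ∀ x y ee, A x ee ee y = A y ee ee x := by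
    intro x y ee
    have h1 := s3 x ee ee y
    have h2 := s3 y ee ee x
    have h3 : A ee ee x y = 0 := by have := s1 ee ee x y; linarith
    have h4 : A ee ee y x = 0 := by have := s1 ee ee y x; linarith
    have h5 : A ee y ee x = A ee x ee y := s2 ee y ee x ▸ (s2 ee x ee y).symm ▸ rfl
    linarith [s2 ee y ee x, s2 ee x ee y]
  -- the main trace identity
  have main : ∀ (n : ℕ) (b : Module.Basis (Fin n) ℝ Vplus),
      (∀ i j, B ((b i : V)) ((b j : V)) = if i = j then 1 else 0) →
      ∀ u y : V, B (ρ u) y = 2 * ∑ k, A u ((b k : V)) ((b k : V)) y := by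
    intro n b hb
    set e : Fin n → V := fun k => (b k : V) with he
    set v : Fin n ⊕ Fin n → V := Sum.elim e (fun k => J (e k)) with hv
    set ε : Fin n ⊕ Fin n → ℝ := Sum.elim (fun _ => 1) (fun _ => -1) with hε'
    have hε : ∀ i, ε i * ε i = 1 := by rintro (i | i) <;> norm_num [hε']
    have hgram : ∀ i j, B (v i) (v j) = if i = j then ε i else 0 := by
      rintro (i | i) (j | j) <;> simp only [hv, hε', Sum.elim_inl, Sum.elim_inr]
      · simpa using hb i j
      · exact horth _ (b i).2 _ (b j).2
      · rw [hBsymm]; exact horth _ (b j).2 _ (b i).2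
      · rw [hJsa, hJ2']
        have : B (e i) (-(e j)) = -B (e i) (e j) := by simp
        rw [this, hb i j]
        by_cases h : i = j <;> simp [h]
    have hli : LinearIndependent ℝ v := by
      rw [Fintype.linearIndependent_iff]
      intro g hg i
      have h0 := congrArg (fun x => B x (v i)) hg
      simp only [map_sum, LinearMap.sum_apply, map_smul, LinearMap.smul_apply, smul_eq_mul,
        hgram, mul_ite, mul_zero, Finset.sum_ite_eq', Finset.mem_univ, if_true,
        map_zero, LinearMap.zero_apply] at h0
      have hεne : ε i ≠ 0 := by rintro h; have := hε i; rw [h] at this; norm_num at this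
      exact (mul_eq_zero.mp h0).resolve_right hεne
    have hsp : ⊤ ≤ Submodule.span ℝ (Set.range v) := by
      rw [← hcompl.sup_eq_top]
      apply sup_le
      · intro x hx
        have hrep := congrArg (Vplus.subtype) (b.sum_repr ⟨x, hx⟩)
        simp only [map_sum, map_smul, Submodule.coe_subtype] at hrep
        have hm : (∑ k, b.repr ⟨x, hx⟩ k • ((b k : V))) ∈ Submodule.span ℝ (Set.range v) :=
          Submodule.sum_mem _ fun k _ =>
            Submodule.smul_mem _ _ (Submodule.subset_span ⟨Sum.inl k, rfl⟩)
        rwa [hrep] at hm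
      · rintro _ ⟨x, hx, rfl⟩
        have hrep := congrArg (fun z : Vplus => J (z : V)) (b.sum_repr ⟨x, hx⟩)
        simp only [map_sum, map_smul, Submodule.coe_sum, Submodule.coe_smul] at hrep
        have hm : (∑ k, b.repr ⟨x, hx⟩ k • J ((b k : V))) ∈ Submodule.span ℝ (Set.range v) :=
          Submodule.sum_mem _ fun k _ =>
            Submodule.smul_mem _ _ (Submodule.subset_span ⟨Sum.inr k, rfl⟩)
        rwa [hrep] at hm
    let bb : Module.Basis (Fin n ⊕ Fin n) ℝ V := Module.Basis.mk hli hsp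
    have hbb : ∀ i, bb i = v i := fun i => Module.Basis.mk_apply hli hsp i
    have hgram' : ∀ i j, B (bb i) (bb j) = if i = j then ε i else 0 := by
      intro i j; rw [hbb, hbb]; exact hgram i j
    intro u y
    rw [hρ]
    unfold ricciForm
    rw [map_add, LinearMap.map_smul, LinearMap.map_smul,
      aux_trace B bb ε hgram' hε, aux_trace B bb ε hgram' hε]
    simp only [LinearMap.flip_apply, hbb]
    have tsum : ∀ p q : V, ∑ i, ε i * B (R (v i) p q) (v i) = 2 * ∑ k, A (e k) p q (e k) := by
      intro p q
      rw [Fintype.sum_sum_type]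
      simp only [hv, hε', Sum.elim_inl, Sum.elim_inr, one_mul, neg_one_mul, hR, hJAA, neg_neg]
      ring
    rw [tsum, tsum]
    have h1 : ∀ k, A (e k) u y (e k) = A u (e k) (e k) y := by
      intro k; rw [s2, ricsym]
    have h2 : ∀ k, A (e k) y u (e k) = A u (e k) (e k) y := by
      intro k; rw [s2]
    simp only [smul_eq_mul]
    rw [show (∑ k, A (e k) u y (e k)) = ∑ k, A u (e k) (e k) y from
        Finset.sum_congr rfl fun k _ => h1 k,
      show (∑ k, A (e k) y u (e k)) = ∑ k, A u (e k) (e k) y from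
        Finset.sum_congr rfl fun k _ => h2 k]
    ring
  refine ⟨?_, ?_, ?_, ?_⟩
  · -- A₁ is an ACT
    exact ⟨⟨fun x x' y z w => by simp only [Submodule.coe_add]; exact a1 _ _ _ _ _,
      fun c x y z w => by simp only [SetLike.val_smul]; exact a2 _ _ _ _ _,
      fun x y y' z w => by simp only [Submodule.coe_add]; exact a3 _ _ _ _ _,
      fun c x y z w => by simp only [SetLike.val_smul]; exact a4 _ _ _ _ _,
      fun x y z z' w => by simp only [Submodule.coe_add]; exact a5 _ _ _ _ _,
      fun c x y z w => by simp only [SetLike.val_smul]; exact a6 _ _ _ _ _,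
      fun x y z w w' => by simp only [Submodule.coe_add]; exact a7 _ _ _ _ _,
      fun c x y z w => by simp only [SetLike.val_smul]; exact a8 _ _ _ _ _⟩,
      fun x y z w => s1 _ _ _ _, fun x y z w => s2 _ _ _ _, fun x y z w => s3 _ _ _ _⟩
  · -- A₂ is an ACT
    refine ⟨⟨fun x x' y z w => by simp only [Submodule.coe_add, map_add]; rw [a1]; ring,
      fun c x y z w => by simp only [SetLike.val_smul, map_smul]; rw [a2]; ring,
      fun x y y' z w => by simp only [Submodule.coe_add]; rw [a3]; ring,
      fun c x y z w => by simp only [SetLike.val_smul]; rw [a4]; ring,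
      fun x y z z' w => by simp only [Submodule.coe_add]; rw [a5]; ring,
      fun c x y z w => by simp only [SetLike.val_smul]; rw [a6]; ring,
      fun x y z w w' => by simp only [Submodule.coe_add]; rw [a7]; ring,
      fun c x y z w => by simp only [SetLike.val_smul]; rw [a8]; ring⟩,
      ?_, ?_, ?_⟩
    · intro x y z w
      dsimp only
      have h1 := (hAJ (y : V) x z w).1
      have h2 := s1 ((y : V)) (J (x : V)) ((z : V)) ((w : V))
      linarith
    · intro x y z w
      dsimp only
      have h1 := hmove (x : V) y z w
      have h2 := s2 ((x : V)) ((y : V)) ((z : V)) (J (w : V))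
      have h3 := (hAJ (z : V) w x y).1
      linarith
    · intro x y z w
      dsimp only
      have h1 := hmove (x : V) y z w
      have h2 := hmove (y : V) z x w
      have h3 := hmove (z : V) x y w
      have h4 := s3 ((x : V)) ((y : V)) ((z : V)) (J (w : V))
      linarith
  · -- A₁ Einstein
    intro n b hb x y
    have h := main n b hb (x : V) (y : V)
    rw [hρeq] at h
    have hx0 : B (J (x : V)) (y : V) = 0 := by rw [hJsa]; exact horth _ x.2 _ y.2
    simp only [LinearMap.add_apply, LinearMap.smul_apply, LinearMap.id_apply, map_add,
      map_smul, smul_eq_mul, LinearMap.smul_apply] at h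
    rw [hx0] at h
    linarith
  · -- A₂ Einstein
    intro n b hb x y
    have h := main n b hb (J (x : V)) (y : V)
    rw [hρeq] at h
    simp only [LinearMap.add_apply, LinearMap.smul_apply, LinearMap.id_apply, map_add,
      map_smul, smul_eq_mul] at h
    have hBJ : B (J (x : V)) (y : V) = 0 := by rw [hJsa]; exact horth _ x.2 _ y.2
    have hjj : B (J (J (x : V))) (y : V) = -B (x : V) (y : V) := by
      rw [hJ2']; simp
    rw [hBJ, hjj] at h
    have hs : (∑ k, -A (J (x : V)) ((b k : V)) ((b k : V)) (y : V))
        = -∑ k, A (J (x : V)) ((b k : V)) ((b k : V)) (y : V) := by simp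
    rw [hs]
    linarith
end
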